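/- Let 0 < r < 1 and let h_r be the unique positive solution of (1 - r)·e^{-h} + e^{-(1-r)h} = r. Let W₀(e^{-1}) denote the principal branch of the Lambert W function evaluated at e^{-1}, i.e., the unique w > 0 with w·e^w = e^{-1}. Then 1 + W₀(e^{-1}) < h_r < (1 + W₀(e^{-1}))/r. -/

import Mathlib

theorem stmt_3 (r hr w : ℝ) (hr0 : 0 < r) (hr1 : r < 1) (hhr : 0 < hr)
    (heq : (1 - r) * Real.exp (-hr) + Real.exp (-(1 - r) * hr) = r)
    (hw0 : 0 < w) (hwe : w * Real.exp w = Real.exp (-1)) :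
    1 + w < hr ∧ hr < (1 + w) / r := by
  have hu : 0 < 1 - r := by linarith
  -- key identity: exp(-(1+w)) = w
  have hew : Real.exp (-(1 + w)) = w := by
    have h1 : Real.exp (-(1 + w)) = Real.exp (-1) * Real.exp (-w) := by
      rw [← Real.exp_add]; ring_nf
    rw [h1, ← hwe, mul_assoc, ← Real.exp_add]
    simp
  constructor
  · -- lower bound
    by_contra h
    push_neg at h
    -- monotonicity
    have m1 : Real.exp (-(1 + w)) ≤ Real.exp (-hr) := Real.exp_le_exp.mpr (by linarith)
    have m2 : Real.exp (-(1 - r) * (1 + w)) ≤ Real.exp (-(1 - r) * hr) :=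
      Real.exp_le_exp.mpr (by nlinarith)
    -- strict inequality at 1+w
    have hx : (-(1 - r) * (1 + w)) ≠ 0 := by nlinarith
    have key : (-(1 - r) * (1 + w)) + 1 < Real.exp (-(1 - r) * (1 + w)) :=
      Real.add_one_lt_exp hx
    nlinarith [m1, m2, key, hew, heq]
  · -- upper bound
    by_contra h
    push_neg at h
    set x : ℝ := (1 + w) * (1 - r) / r with hxdef
    have hx0 : 0 < x := by positivity
    have hrx : r * x = (1 + w) * (1 - r) := by
      rw [hxdef]; field_simp
    have e1 : Real.exp (-(1 - r) * ((1 + w) / r)) = Real.exp (-x) := by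
      congr 1
      field_simp [hxdef]
      rw [hrx]; ring
    have harg : -((1 + w) / r) = -(1 + w) + -x := by
      field_simp [hxdef]
      linear_combination hrx
    have e2 : Real.exp (-((1 + w) / r)) = w * Real.exp (-x) := by
      rw [harg, Real.exp_add, hew]
    have key : x + 1 < Real.exp x := Real.add_one_lt_exp hx0.ne'
    have hE : Real.exp x * Real.exp (-x) = 1 := by rw [← Real.exp_add]; simp
    have hEpos : 0 < Real.exp (-x) := Real.exp_pos _
    -- value at (1+w)/r is < r
    have hlt : (1 - r) * Real.exp (-((1 + w) / r)) + Real.exp (-(1 - r) * ((1 + w) / r)) < r := by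
      rw [e1, e2]
      nlinarith [mul_lt_mul_of_pos_right key (mul_pos hr0 hEpos), hE, hrx, hEpos, hw0]
    -- monotonicity
    have m1 : Real.exp (-hr) ≤ Real.exp (-((1 + w) / r)) := Real.exp_le_exp.mpr (by linarith)
    have m2 : Real.exp (-(1 - r) * hr) ≤ Real.exp (-(1 - r) * ((1 + w) / r)) :=
      Real.exp_le_exp.mpr (by nlinarith)
    nlinarith [m1, m2, hlt, heq]
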